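/- Let P be an integral polytope in ℝ^n such that the intersection P ∩ {x ∈ ℝ^n : x_n = 0} is a nonempty integral polytope. Then the half P₊ = {x ∈ P : x_n ≥ 0} is also an integral polytope. -/

import Mathlib

open Pointwise

/-- An integral polytope: the convex hull of a nonempty finite set of
points all of whose coordinates are integers. -/
def IsIntegralPolytope {n : ℕ} (P : Set (Fin n → ℝ)) : Prop :=
  ∃ S : Finset (Fin n → ℝ), S.Nonempty ∧ (∀ x ∈ S, ∀ i, ∃ m : ℤ, x i = (m : ℝ)) ∧
    P = convexHull ℝ (S : Set (Fin n → ℝ))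

/-- If `P` is an integral polytope in `ℝ^(n+1)` whose intersection with the
hyperplane `{xₙ = 0}` is a nonempty integral polytope, then the half
`P₊ = {x ∈ P : xₙ ≥ 0}` is also an integral polytope. -/
theorem half_of_integral_polytope (n : ℕ) (P : Set (Fin (n + 1) → ℝ))
    (hP : IsIntegralPolytope P)
    (hne : (P ∩ {x : Fin (n + 1) → ℝ | x (Fin.last n) = 0}).Nonempty)
    (hslice : IsIntegralPolytope (P ∩ {x : Fin (n + 1) → ℝ | x (Fin.last n) = 0})) :
    IsIntegralPolytope {x ∈ P | 0 ≤ x (Fin.last n)} := by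
  obtain ⟨S, hSne, hSint, hSP⟩ := hP
  obtain ⟨T, hTne, hTint, hTP⟩ := hslice
  have hlin : IsLinearMap ℝ (fun x : Fin (n+1) → ℝ => x (Fin.last n)) :=
    ⟨fun a b => rfl, fun c a => rfl⟩
  set ev : (Fin (n+1) → ℝ) → ℝ := fun x => x (Fin.last n) with hev
  set Sp : Finset (Fin (n+1) → ℝ) := S.filter (fun x => 0 ≤ ev x) with hSp
  set Sm : Finset (Fin (n+1) → ℝ) := S.filter (fun x => ¬ 0 ≤ ev x) with hSm
  -- hull Sp ⊆ {x | 0 ≤ ev x}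
  have hullSp : (convexHull ℝ (Sp : Set (Fin (n+1) → ℝ))) ⊆ {x | 0 ≤ ev x} := by
    apply convexHull_min _ (convex_halfSpace_ge hlin 0)
    intro x hx
    simp only [hSp, Finset.coe_filter, Set.mem_setOf_eq] at hx
    exact hx.2
  have hullSm : (convexHull ℝ (Sm : Set (Fin (n+1) → ℝ))) ⊆ {x | ev x < 0} := by
    apply convexHull_min _ (convex_halfSpace_lt hlin 0)
    intro x hx
    simp only [hSm, Finset.coe_filter, Set.mem_setOf_eq, not_le] at hx
    exact hx.2
  have hSpS : (Sp : Set (Fin (n+1) → ℝ)) ⊆ S := Finset.coe_subset.2 (Finset.filter_subset _ _)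
  have hT_sub : (T : Set (Fin (n+1) → ℝ)) ⊆ P ∩ {x | x (Fin.last n) = 0} := by
    rw [hTP]; exact subset_convexHull ℝ _
  -- case Sm empty
  by_cases hSmE : Sm = ∅
  · -- every point of S has ev ≥ 0, so P ⊆ {0 ≤ ev}, and the set is P itself
    refine ⟨S, hSne, hSint, ?_⟩
    rw [← hSP]
    have hPsub : P ⊆ {x | 0 ≤ ev x} := by
      rw [hSP]
      apply convexHull_min _ (convex_halfSpace_ge hlin 0)
      intro x hx
      by_contra h
      have : x ∈ Sm := Finset.mem_filter.2 ⟨hx, h⟩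
      simp [hSmE] at this
    ext x
    exact ⟨fun h => h.1, fun h => ⟨h, hPsub h⟩⟩
  have hSmne : (Sm : Set (Fin (n+1) → ℝ)).Nonempty := by
    rcases Finset.nonempty_iff_ne_empty.2 hSmE with ⟨x, hx⟩
    exact ⟨x, hx⟩
  -- Sp nonempty? if empty, contradiction with hne
  have hSpne : (Sp : Set (Fin (n+1) → ℝ)).Nonempty := by
    by_contra h
    have hSpE : Sp = ∅ := Finset.coe_eq_empty.1 (Set.not_nonempty_iff_eq_empty.1 h)
    obtain ⟨p, hpP, hp0⟩ := hne
    have hpm : p ∈ convexHull ℝ (Sm : Set (Fin (n+1) → ℝ)) := by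
      have : (Sm : Set (Fin (n+1) → ℝ)) = S := by
        ext x; simp only [hSm, Finset.coe_filter, Set.mem_setOf_eq, Finset.mem_coe]
        refine ⟨fun h => h.1, fun h => ⟨h, fun hge => ?_⟩⟩
        have : x ∈ Sp := Finset.mem_filter.2 ⟨h, hge⟩
        simp [hSpE] at this
      rw [this, ← hSP]; exact hpP
    have := hullSm hpm
    rw [Set.mem_setOf_eq, hev] at this
    simp only [Set.mem_setOf_eq] at hp0
    linarith
  -- main case
  refine ⟨Sp ∪ T, ?_, ?_, ?_⟩
  · exact Finset.Nonempty.inr hTne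
  · intro x hx i
    rcases Finset.mem_union.1 hx with h | h
    · exact hSint x (hSpS h) i
    · exact hTint x h i
  · apply Set.Subset.antisymm
    · -- {x ∈ P | 0 ≤ ev x} ⊆ hull (Sp ∪ T)
      intro x ⟨hxP, hx0⟩
      have hxS : x ∈ convexHull ℝ ((Sp : Set (Fin (n+1) → ℝ)) ∪ Sm) := by
        have : (Sp : Set (Fin (n+1) → ℝ)) ∪ Sm = S := by
          ext y
          simp only [Set.mem_union, Finset.mem_coe, hSp, hSm, Finset.mem_filter]
          tauto
        rw [this, ← hSP]; exact hxP
      rw [convexHull_union hSpne hSmne, mem_convexJoin] at hxS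
      obtain ⟨y, hy, z, hz, a, b, ha, hb, hab, hxyz⟩ := hxS
      have hyn : 0 ≤ ev y := hullSp hy
      have hzn : ev z < 0 := hullSm hz
      rw [Finset.coe_union, convexHull_union hSpne (Finset.coe_nonempty.2 hTne),
        mem_convexJoin]
      by_cases hb0 : b = 0
      · obtain ⟨t0, ht0⟩ := hTne
        have hxy : x = y := by
          rw [← hxyz, hb0]
          have : a = 1 := by linarith
          simp [this]
        exact ⟨y, hy, t0, subset_convexHull ℝ _ ht0, hxy ▸ left_mem_segment ℝ y t0⟩
      · have hb' : 0 < b := lt_of_le_of_ne hb (Ne.symm hb0)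
        have hd : 0 < ev y - ev z := by linarith
        set s : ℝ := ev y / (ev y - ev z) with hs
        have hs0 : 0 ≤ s := div_nonneg hyn (le_of_lt hd)
        have hs1 : s ≤ 1 := by
          rw [hs, div_le_one hd]; linarith
        have hxev : ev x = a * ev y + b * ev z := by
          rw [← hxyz, hlin.map_add, hlin.map_smul, hlin.map_smul]; rfl
        have hy0 : 0 < ev y := by
          rcases lt_or_eq_of_le hyn with h | h
          · exact h
          · exfalso; nlinarith
        have hspos : 0 < s := div_pos hy0 hd
        set p : Fin (n+1) → ℝ := (1 - s) • y + s • z with hp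
        have hpev : ev p = 0 := by
          rw [hp, hlin.map_add, hlin.map_smul, hlin.map_smul]
          show (1 - s) * ev y + s * ev z = 0
          rw [hs]; field_simp; ring
        have hpS : p ∈ convexHull ℝ (S : Set (Fin (n+1) → ℝ)) :=
          (convex_convexHull ℝ _).segment_subset
            (convexHull_mono hSpS hy)
            (convexHull_mono (show (Sm : Set (Fin (n+1) → ℝ)) ⊆ (S : Set (Fin (n+1) → ℝ)) from Finset.coe_subset.2 (Finset.filter_subset _ _)) hz)
            ⟨1 - s, s, by linarith, hs0, by ring, rfl⟩
        have hpT : p ∈ convexHull ℝ (T : Set (Fin (n+1) → ℝ)) := by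
          rw [← hTP]; exact ⟨hSP ▸ hpS, hpev⟩
        set u : ℝ := b / s with hu
        have hu0 : 0 ≤ u := div_nonneg hb (le_of_lt hspos)
        have hus : u * s = b := by rw [hu]; field_simp
        have hu1 : u ≤ 1 := by
          rw [hu, div_le_one hspos, hs, le_div_iff₀ hd]; nlinarith
        refine ⟨y, hy, p, hpT, 1 - u, u, by linarith, hu0, by ring, ?_⟩
        have key : (1 - u) • y + u • p = (1 - u * s) • y + (u * s) • z := by
          rw [hp]; module
        rw [key, hus]
        have : 1 - b = a := by linarith
        rw [this, hxyz]
    · apply convexHull_min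
      · intro x hx
        rcases Finset.mem_coe.1 hx |> Finset.mem_union.1 with h | h
        · refine ⟨?_, (Finset.mem_filter.1 h).2⟩
          rw [hSP]; exact subset_convexHull ℝ _ (hSpS h)
        · obtain ⟨h1, h2⟩ := hT_sub h
          exact ⟨h1, le_of_eq h2.symm⟩
      · exact Convex.inter (hSP ▸ convex_convexHull ℝ _) (convex_halfSpace_ge hlin 0)
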